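/- Let A be an arbitrary r × c quaternion matrix with r ≤ c. Then there exist unitary quaternion matrices L ∈ ℍ^{r×r} and R ∈ ℍ^{c×c} and a real matrix B ∈ ℝ^{r×c} which is upper bidiagonal (B i j = 0 whenever j ≠ i and j ≠ i + 1, as natural-number indices) such that L * A * R equals the entrywise coercion of B into quaternion entries. -/

import Mathlib

open Matrix

namespace QB
local notation "ℍ" => Quaternion ℝ

noncomputable def ext1 {n : ℕ} (M : Matrix (Fin n) (Fin n) ℍ) : Matrix (Fin (n+1)) (Fin (n+1)) ℍ :=
  of (Fin.cons (Fin.cons 1 0) (fun i' => Fin.cons 0 (M i')))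

@[simp] lemma ext1_zero_zero {n} (M : Matrix (Fin n) (Fin n) ℍ) : ext1 M 0 0 = 1 := rfl
@[simp] lemma ext1_zero_succ {n} (M : Matrix (Fin n) (Fin n) ℍ) (j : Fin n) :
    ext1 M 0 j.succ = 0 := by simp [ext1]
@[simp] lemma ext1_succ_zero {n} (M : Matrix (Fin n) (Fin n) ℍ) (i : Fin n) :
    ext1 M i.succ 0 = 0 := by simp [ext1]
@[simp] lemma ext1_succ_succ {n} (M : Matrix (Fin n) (Fin n) ℍ) (i j : Fin n) :
    ext1 M i.succ j.succ = M i j := by simp [ext1]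

lemma ext1_mul {n} (M N : Matrix (Fin n) (Fin n) ℍ) :
    ext1 M * ext1 N = ext1 (M * N) := by
  refine Matrix.ext fun i j => ?_
  refine Fin.cases ?_ (fun i' => ?_) i <;> refine Fin.cases ?_ (fun j' => ?_) j <;>
    simp [mul_apply, Fin.sum_univ_succ]

lemma ext1_one {n} : ext1 (1 : Matrix (Fin n) (Fin n) ℍ) = 1 := by
  refine Matrix.ext fun i j => ?_
  refine Fin.cases ?_ (fun i' => ?_) i <;> refine Fin.cases ?_ (fun j' => ?_) j <;>
    simp [one_apply, Fin.succ_ne_zero, (Fin.succ_ne_zero _).symm, Fin.succ_inj]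

lemma ext1_conjTranspose {n} (M : Matrix (Fin n) (Fin n) ℍ) :
    (ext1 M)ᴴ = ext1 Mᴴ := by
  refine Matrix.ext fun i j => ?_
  refine Fin.cases ?_ (fun i' => ?_) i <;> refine Fin.cases ?_ (fun j' => ?_) j <;>
    simp [conjTranspose_apply]


lemma coe_sum {ι : Type*} (s : Finset ι) (f : ι → ℝ) :
    ((∑ i ∈ s, f i : ℝ) : ℍ) = ∑ i ∈ s, ((f i : ℝ) : ℍ) := by
  classical
  induction s using Finset.induction with
  | empty => simp
  | insert _ _ h ih => simp [Finset.sum_insert h, ih]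

lemma star_rsmul (c : ℝ) (q : ℍ) : star (c • q) = c • star q := by
  rw [← Quaternion.coe_mul_eq_smul, StarMul.star_mul, Quaternion.star_coe,
    ← Quaternion.coe_commutes, Quaternion.coe_mul_eq_smul]

lemma householder {n : ℕ} (w : Fin (n+1) → ℍ) (t : ℝ) (ht : 0 ≤ t)
    (hw0 : w 0 = ((t : ℝ) : ℍ)) :
    ∃ (H : Matrix (Fin (n+1)) (Fin (n+1)) ℍ) (β : ℝ),
      H * Hᴴ = 1 ∧ Hᴴ * H = 1 ∧
      H.mulVec w = fun i => if i = 0 then ((β : ℝ) : ℍ) else 0 := by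
  classical
  set S : ℝ := ∑ k, Quaternion.normSq (w k) with hS
  have hS0 : 0 ≤ S := Finset.sum_nonneg fun k _ => Quaternion.normSq_nonneg
  set α : ℝ := Real.sqrt S with hα
  have hα0 : 0 ≤ α := Real.sqrt_nonneg S
  have hαα : α * α = S := Real.mul_self_sqrt hS0
  set u : Fin (n+1) → ℍ := fun i => w i - if i = 0 then ((α : ℝ) : ℍ) else 0 with hu
  by_cases h0 : u = 0
  · refine ⟨1, α, by simp, by simp, ?_⟩
    funext i
    have h1 := congrFun h0 i
    simp only [hu, sub_eq_zero, Pi.zero_apply] at h1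
    simp [Matrix.one_mulVec, h1]
  · set s : ℝ := ∑ k, Quaternion.normSq (u k) with hs
    have hu0 : u 0 = ((t - α : ℝ) : ℍ) := by
      simp only [hu, hw0, if_pos rfl]
      push_cast; ring
    have htail : ∀ k : Fin n, u k.succ = w k.succ := fun k => by
      simp [hu, Fin.succ_ne_zero]
    have hStail : ∑ k : Fin n, Quaternion.normSq (w k.succ) = S - t^2 := by
      rw [hS, Fin.sum_univ_succ, hw0, Quaternion.normSq_coe]; ring
    have hsval : s = (t - α)^2 + (S - t^2) := by
      rw [hs, Fin.sum_univ_succ, hu0, Quaternion.normSq_coe, ← hStail]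
      congr 1
      exact Finset.sum_congr rfl fun k _ => by rw [htail k]
    have hs2 : s = 2*(α*α - α*t) := by rw [hsval, ← hαα]; ring
    have hsne : s ≠ 0 := by
      intro hz
      apply h0
      have := (Finset.sum_eq_zero_iff_of_nonneg
        (fun k _ => Quaternion.normSq_nonneg)).mp (hs ▸ hz)
      funext k
      exact Quaternion.normSq_eq_zero.mp (this k (Finset.mem_univ k))
    set c : ℝ := 2 / s with hc
    have hkey : c * (α*α - α*t) = 1 := by
      have h2 : α*α - α*t = s / 2 := by rw [hs2]; ring
      rw [h2, hc]; field_simp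
    set P : Matrix (Fin (n+1)) (Fin (n+1)) ℍ := Matrix.of fun i j => u i * star (u j) with hP
    have hPH : Pᴴ = P := Matrix.ext fun i j => by
      simp [hP, Matrix.conjTranspose_apply, StarMul.star_mul]
    have hterm : ∀ (i j k : Fin (n+1)),
        (u i * star (u k)) * (u k * star (u j))
          = Quaternion.normSq (u k) • (u i * star (u j)) := fun i j k => by
      rw [mul_assoc, ← mul_assoc (star (u k)), Quaternion.star_mul_self,
        Quaternion.coe_mul_eq_smul, mul_smul_comm]
    have hPP : P * P = s • P := by
      refine Matrix.ext fun i j => ?_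
      simp only [Matrix.mul_apply, Matrix.smul_apply, hP, Matrix.of_apply]
      rw [Finset.sum_congr rfl fun k _ => hterm i j k, ← Finset.sum_smul, ← hs]
    set H : Matrix (Fin (n+1)) (Fin (n+1)) ℍ := 1 - c • P with hH
    have hHH : Hᴴ = H := by
      refine Matrix.ext fun i j => ?_
      simp only [Matrix.conjTranspose_apply, hH, Matrix.sub_apply, Matrix.smul_apply,
        star_sub, star_rsmul]
      congr 1
      · simp [Matrix.one_apply, eq_comm, apply_ite (star : ℍ → ℍ)]
      · congr 1
        simp [hP, StarMul.star_mul]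
    have hcc : c * c * s = c + c := by
      rw [hc]; field_simp; ring
    have hH2 : H * H = 1 := by
      rw [hH, sub_mul, one_mul, mul_sub, mul_one, Matrix.smul_mul,
        Matrix.mul_smul, hPP, smul_smul, smul_smul, hcc, add_smul]
      abel
    have hsum : ∑ k, star (u k) * w k = ((α*α - α*t : ℝ) : ℍ) := by
      rw [Fin.sum_univ_succ, hu0, hw0, Quaternion.star_coe, ← Quaternion.coe_mul]
      have : ∀ k : Fin n, star (u k.succ) * w k.succ
          = ((Quaternion.normSq (w k.succ) : ℝ) : ℍ) := fun k => by
        rw [htail k, Quaternion.star_mul_self]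
      rw [Finset.sum_congr rfl fun k _ => this k, ← coe_sum, hStail, ← Quaternion.coe_add,
        ← hαα]
      norm_cast
      ring
    have hmul : H.mulVec w = fun i => if i = 0 then ((α : ℝ) : ℍ) else 0 := by
      funext i
      have hPv : P.mulVec w i = u i * ((α*α - α*t : ℝ) : ℍ) := by
        simp only [Matrix.mulVec, dotProduct, hP, Matrix.of_apply]
        simp_rw [mul_assoc, ← Finset.mul_sum]
        rw [hsum]
      rw [hH, Matrix.sub_mulVec, Matrix.one_mulVec, Matrix.smul_mulVec]
      simp only [Pi.sub_apply, Pi.smul_apply, hPv]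
      rw [← mul_smul_comm, Quaternion.smul_coe, hkey]
      simp [hu]
    exact ⟨H, α, by rw [hHH, hH2], by rw [hHH, hH2], hmul⟩

lemma exists_unitary_mulVec (n : ℕ) (v : Fin n → ℍ) :
    ∃ (U : Matrix (Fin n) (Fin n) ℍ) (β : ℝ), U * Uᴴ = 1 ∧ Uᴴ * U = 1 ∧
      U.mulVec v = fun i : Fin n => if (i : ℕ) = 0 then ((β : ℝ) : ℍ) else 0 := by
  classical
  match n with
  | 0 => exact ⟨1, 0, by simp, by simp, funext fun i => i.elim0⟩
  | Nat.succ m =>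
    set q : ℍ := v 0 with hq
    set t : ℝ := ‖q‖ with ht
    set d : ℍ := if q = 0 then 1 else star q * ((t⁻¹ : ℝ) : ℍ) with hd
    have hqq : star q * q = ((t * t : ℝ) : ℍ) := by
      rw [Quaternion.star_mul_self, Quaternion.normSq_eq_norm_mul_self, ht]
    have hdq : d * q = ((t : ℝ) : ℍ) := by
      by_cases h : q = 0
      · simp [hd, h, ht]
      · have htne : t ≠ 0 := by simpa [ht, norm_ne_zero_iff] using h
        rw [hd, if_neg h, mul_assoc, Quaternion.coe_mul_eq_smul, mul_smul_comm,
          Quaternion.star_mul_self, Quaternion.normSq_eq_norm_mul_self, Quaternion.smul_coe,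
          ← ht]
        congr 1
        field_simp
    have hdd : d * star d = 1 := by
      by_cases h : q = 0
      · simp [hd, h]
      · have htne : t ≠ 0 := by simpa [ht, norm_ne_zero_iff] using h
        rw [hd, if_neg h]
        rw [StarMul.star_mul, Quaternion.star_coe, star_star]
        rw [Quaternion.mul_coe_eq_smul, Quaternion.coe_mul_eq_smul, smul_mul_assoc,
          mul_smul_comm, Quaternion.star_mul_self, Quaternion.normSq_eq_norm_mul_self,
          ← ht, Quaternion.smul_coe, Quaternion.smul_coe]
        have hone : t⁻¹ * (t⁻¹ * (t * t)) = 1 := by field_simp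
        rw [hone]
        exact Quaternion.coe_one
    have hdd' : star d * d = 1 := by
      by_cases h : q = 0
      · simp [hd, h]
      · have htne : t ≠ 0 := by simpa [ht, norm_ne_zero_iff] using h
        rw [hd, if_neg h]
        rw [StarMul.star_mul, Quaternion.star_coe, star_star]
        rw [Quaternion.coe_mul_eq_smul, Quaternion.mul_coe_eq_smul, smul_mul_assoc,
          mul_smul_comm, Quaternion.self_mul_star, Quaternion.normSq_eq_norm_mul_self,
          ← ht, Quaternion.smul_coe, Quaternion.smul_coe]
        have hone : t⁻¹ * (t⁻¹ * (t * t)) = 1 := by field_simp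
        rw [hone]
        exact Quaternion.coe_one
    set f : Fin (m+1) → ℍ := fun i => if i = 0 then d else 1 with hf
    set D : Matrix (Fin (m+1)) (Fin (m+1)) ℍ := diagonal f with hD
    have hDU : D * Dᴴ = 1 := by
      rw [hD, diagonal_conjTranspose, diagonal_mul_diagonal]
      simp only [Pi.star_apply]
      rw [show (fun i => f i * star (f i)) = fun _ : Fin (m+1) => (1 : ℍ) from
        funext fun i => by by_cases h : i = 0 <;> simp [hf, h, hdd], diagonal_one]
    have hDU' : Dᴴ * D = 1 := by
      rw [hD, diagonal_conjTranspose, diagonal_mul_diagonal]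
      simp only [Pi.star_apply]
      rw [show (fun i => star (f i) * f i) = fun _ : Fin (m+1) => (1 : ℍ) from
        funext fun i => by by_cases h : i = 0 <;> simp [hf, h, hdd'], diagonal_one]
    have hDv0 : (D.mulVec v) 0 = ((t : ℝ) : ℍ) := by
      rw [hD, mulVec_diagonal, hf]
      simp [hdq, ← hq]
    obtain ⟨H, β, h1, h2, h3⟩ := householder (D.mulVec v) t (norm_nonneg q) hDv0
    refine ⟨H * D, β, ?_, ?_, ?_⟩
    · rw [conjTranspose_mul, mul_assoc, ← mul_assoc D, hDU, one_mul, h1]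
    · rw [conjTranspose_mul, mul_assoc, ← mul_assoc Hᴴ, h2, one_mul, hDU']
    · rw [← mulVec_mulVec, h3]
      funext i
      simp only [Fin.val_eq_zero_iff]

lemma exists_unitary_vecMul (n : ℕ) (w : Fin n → ℍ) :
    ∃ (V : Matrix (Fin n) (Fin n) ℍ) (γ : ℝ), V * Vᴴ = 1 ∧ Vᴴ * V = 1 ∧
      Matrix.vecMul w V = fun j : Fin n => if (j : ℕ) = 0 then ((γ : ℝ) : ℍ) else 0 := by
  obtain ⟨U, β, h1, h2, h3⟩ := exists_unitary_mulVec n (fun k => star (w k))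
  refine ⟨Uᴴ, β, by simpa using h2, by simpa using h1, ?_⟩
  funext j
  have h4 := congrFun h3 j
  have h5 : Matrix.vecMul w Uᴴ j = star (U.mulVec (fun k => star (w k)) j) := by
    simp only [Matrix.vecMul, Matrix.mulVec, dotProduct, star_sum,
      conjTranspose_apply, StarMul.star_mul, star_star]
  rw [h5, h4]
  by_cases h : (j : ℕ) = 0 <;> simp [h]

lemma aux : ∀ (r : ℕ) (c : ℕ), r ≤ c → ∀ (A : Matrix (Fin r) (Fin c) ℍ),
    ∃ (L : Matrix (Fin r) (Fin r) ℍ) (R : Matrix (Fin c) (Fin c) ℍ)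
      (B : Matrix (Fin r) (Fin c) ℝ),
      L * Lᴴ = 1 ∧ Lᴴ * L = 1 ∧ R * Rᴴ = 1 ∧ Rᴴ * R = 1 ∧
      (∀ (i : Fin c) (j : Fin c), (i : ℕ) = 0 → R i j = if (j : ℕ) = 0 then 1 else 0) ∧
      (∀ (i : Fin r) (j : Fin c), (j : ℕ) ≠ (i : ℕ) → (j : ℕ) ≠ (i : ℕ) + 1 → B i j = 0) ∧
      L * A * R = B.map (fun x : ℝ => ((x : ℝ) : ℍ)) := by
  intro r
  induction r with
  | zero =>
    intro c _ A
    refine ⟨1, 1, 0, by simp, by simp, by simp, by simp, ?_, fun i j _ _ => rfl, ?_⟩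
    · intro i j hi
      simp [one_apply, Fin.ext_iff, hi, eq_comm]
    · refine Matrix.ext fun i j => i.elim0
  | succ r' IH =>
    intro c hrc A
    obtain ⟨c', rfl⟩ : ∃ c', c = c' + 1 := ⟨c - 1, by omega⟩
    obtain ⟨U₁, β, hU1, hU2, hUv⟩ := exists_unitary_mulVec (r'+1) (fun i => A i 0)
    set A₁ : Matrix (Fin (r'+1)) (Fin (c'+1)) ℍ := U₁ * A with hA₁
    have hA₁col : ∀ i, A₁ i 0 = if (i : ℕ) = 0 then ((β:ℝ):ℍ) else 0 := fun i => by
      have := congrFun hUv i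
      simpa [hA₁, Matrix.mul_apply, Matrix.mulVec, dotProduct] using this
    obtain ⟨W, γ, hW1, hW2, hWv⟩ :=
      exists_unitary_vecMul c' (fun j' : Fin c' => A₁ 0 j'.succ)
    set A₂ : Matrix (Fin (r'+1)) (Fin (c'+1)) ℍ := A₁ * ext1 W with hA₂
    have hA₂col : ∀ i, A₂ i 0 = if (i : ℕ) = 0 then ((β:ℝ):ℍ) else 0 := fun i => by
      rw [hA₂, Matrix.mul_apply, Fin.sum_univ_succ]
      simp [hA₁col i]
    have hA₂row : ∀ j' : Fin c', A₂ 0 j'.succ = if (j' : ℕ) = 0 then ((γ:ℝ):ℍ) else 0 :=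
      fun j' => by
      rw [hA₂, Matrix.mul_apply, Fin.sum_univ_succ]
      have := congrFun hWv j'
      simpa [Matrix.vecMul, dotProduct] using this
    set A₃ : Matrix (Fin r') (Fin c') ℍ := A₂.submatrix Fin.succ Fin.succ with hA₃
    obtain ⟨L', R', B', hL'1, hL'2, hR'1, hR'2, hR'row, hB'bd, hB'eq⟩ :=
      IH c' (by omega) A₃
    refine ⟨ext1 L' * U₁, ext1 (W * R'),
      Matrix.of (Fin.cons (Fin.cons β (fun j' => if (j' : ℕ) = 0 then γ else 0))
        (fun i' => Fin.cons 0 (B' i'))), ?_, ?_, ?_, ?_, ?_, ?_, ?_⟩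
    · rw [conjTranspose_mul, mul_assoc, ← mul_assoc U₁, hU1, one_mul,
        ext1_conjTranspose, ext1_mul, hL'1, ext1_one]
    · rw [conjTranspose_mul, mul_assoc, ← mul_assoc (ext1 L')ᴴ, ext1_conjTranspose,
        ext1_mul, hL'2, ext1_one, one_mul, hU2]
    · rw [ext1_conjTranspose, ext1_mul]
      rw [show (W * R') * (W * R')ᴴ = W * (R' * R'ᴴ) * Wᴴ by
        rw [conjTranspose_mul]; noncomm_ring, hR'1, mul_one, hW1, ext1_one]
    · rw [ext1_conjTranspose, ext1_mul]
      rw [show (W * R')ᴴ * (W * R') = R'ᴴ * (Wᴴ * W) * R' by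
        rw [conjTranspose_mul]; noncomm_ring, hW2, mul_one, hR'2, ext1_one]
    · intro i j hi
      have hi0 : i = 0 := Fin.ext (by simp [hi])
      subst hi0
      refine Fin.cases ?_ (fun j' => ?_) j <;> simp [Fin.succ_ne_zero]
    · intro i j
      refine Fin.cases ?_ (fun i' => ?_) i <;> refine Fin.cases ?_ (fun j' => ?_) j
      · intro h _; simp at h
      · intro _ h2
        simp only [Fin.val_succ, Fin.val_zero] at h2 ⊢
        simp only [Matrix.of_apply, Fin.cons_zero, Fin.cons_succ]
        rw [if_neg (by omega)]
      · intro _ _; simp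
      · intro h1 h2
        simp only [Fin.val_succ] at h1 h2
        simp only [Matrix.of_apply, Fin.cons_succ]
        exact hB'bd i' j' (by omega) (by omega)
    · have hassoc : (ext1 L' * U₁) * A * ext1 (W * R')
          = ext1 L' * (A₂ * ext1 R') := by
        rw [← ext1_mul, hA₂, hA₁]
        simp only [Matrix.mul_assoc]
      rw [hassoc]
      refine Matrix.ext fun i j => ?_
      have hNzero : ∀ k, (A₂ * ext1 R') k 0 = A₂ k 0 := fun k => by
        rw [Matrix.mul_apply, Fin.sum_univ_succ]
        simp
      have hNsucc : ∀ k (j' : Fin c'), (A₂ * ext1 R') k j'.succ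
          = ∑ m', A₂ k m'.succ * R' m' j' := fun k j' => by
        rw [Matrix.mul_apply, Fin.sum_univ_succ]
        simp
      refine Fin.cases ?_ (fun i' => ?_) i <;> refine Fin.cases ?_ (fun j' => ?_) j
      · rw [Matrix.mul_apply, Fin.sum_univ_succ]
        simp [hNzero, hA₂col]
      · rw [Matrix.mul_apply, Fin.sum_univ_succ]
        simp only [ext1_zero_zero, ext1_zero_succ, zero_mul, one_mul,
          Finset.sum_const_zero, add_zero, hNsucc]
        have hc'pos : 0 < c' := j'.pos
        have hz : ∀ m' : Fin c', A₂ 0 m'.succ * R' m' j'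
            = if m' = (⟨0, hc'pos⟩ : Fin c') then ((γ:ℝ):ℍ) * R' m' j' else 0 := fun m' => by
          rw [hA₂row m']
          by_cases h : (m' : ℕ) = 0
          · rw [if_pos h, if_pos (Fin.ext h)]
          · rw [if_neg h, if_neg (fun hh => h (by rw [hh])), zero_mul]
        rw [Finset.sum_congr rfl fun m' _ => hz m', Finset.sum_ite_eq' Finset.univ]
        rw [if_pos (Finset.mem_univ _), hR'row _ j' rfl]
        simp only [Matrix.map_apply, Matrix.of_apply, Fin.cons_zero, Fin.cons_succ]
        by_cases h : (j' : ℕ) = 0 <;> simp [h]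
      · rw [Matrix.mul_apply, Fin.sum_univ_succ]
        simp only [ext1_succ_zero, zero_mul, zero_add, ext1_succ_succ, hNzero]
        have : ∀ k' : Fin r', A₂ k'.succ 0 = 0 := fun k' => by
          rw [hA₂col]; simp [Fin.val_succ]
        simp [this]
      · rw [Matrix.mul_apply, Fin.sum_univ_succ]
        simp only [ext1_succ_zero, zero_mul, zero_add, ext1_succ_succ, hNsucc]
        have hB'eq' := hB'eq
        rw [Matrix.mul_assoc] at hB'eq'
        have hgoal := congrFun (congrFun hB'eq' i') j'
        simp only [Matrix.mul_apply, Matrix.map_apply, hA₃, Matrix.submatrix_apply] at hgoal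
        simp only [Matrix.map_apply, Matrix.of_apply, Fin.cons_succ]
        exact hgoal


end QB

/-- **Real upper-bidiagonalization of a quaternion matrix** (Theorem 3 of the paper,
case `r ≤ c`): every `r × c` quaternion matrix `A` with `r ≤ c` can be transformed by
unitary quaternion matrices `L` and `R` into a *real* upper bidiagonal matrix `B`, i.e.
`L A R = B`. -/
theorem quaternion_upper_bidiagonalization (r c : ℕ) (hrc : r ≤ c)
    (A : Matrix (Fin r) (Fin c) (Quaternion ℝ)) :
    ∃ (L : Matrix (Fin r) (Fin r) (Quaternion ℝ))
      (R : Matrix (Fin c) (Fin c) (Quaternion ℝ))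
      (B : Matrix (Fin r) (Fin c) ℝ),
      L * Lᴴ = 1 ∧ Lᴴ * L = 1 ∧ R * Rᴴ = 1 ∧ Rᴴ * R = 1 ∧
      (∀ (i : Fin r) (j : Fin c), (j : ℕ) ≠ (i : ℕ) → (j : ℕ) ≠ (i : ℕ) + 1 → B i j = 0) ∧
      L * A * R = B.map (fun x : ℝ => ((x : ℝ) : Quaternion ℝ)) := by
  obtain ⟨L, R, B, h1, h2, h3, h4, _, h6, h7⟩ := QB.aux r c hrc A
  exact ⟨L, R, B, h1, h2, h3, h4, h6, h7⟩
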